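/- Theorem 1: a supervisor realization R is robust with respect to G, X_crit and A if and only if for every s ∈ P_{Σ_mΣ_{o,e}}(L(G_a||R_a||A)), the run word W(s; γ₀, γ₁, …, γ_{|s|}) belongs to L(𝒜^sup), where γ₀ = C_R(ε) and γ_i = C_R(P^S(s^i)) with s^i the length-i prefix of s. -/

import Mathlib

attribute [local instance] Classical.propDecidable

noncomputable section

namespace RobustDES

/-- Events of the attacked system `Σ_m = Σ ∪ Σ_a^i ∪ Σ_a^d`:
`plain a` is a legitimate event `a ∈ Σ`, `ins a` is the inserted copy `a_i`
and `del a` is the deleted copy `a_d`. -/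
inductive Ev (S : Type) : Type
  | plain : S → Ev S
  | ins : S → Ev S
  | del : S → Ev S

/-- Extension of a partial transition function to strings. -/
def run {X E : Type} (δ : X → E → Option X) : X → List E → Option X
  | x, [] => some x
  | x, e :: s => (δ x e).bind fun y => run δ y s

/-- The language generated by a partial automaton `(X, δ, x0)`. -/
def Lang {X E : Type} (δ : X → E → Option X) (x0 : X) : Set (List E) :=
  { s | (run δ x0 s).isSome }

variable {S XG XR XA : Type}

/-- The projection `P^G : Σ_m* → Σ*` (`a, a_d ↦ a`, `a_i ↦ ε`). -/
def PGproj : List (Ev S) → List S := fun s =>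
  s.flatMap fun e =>
    match e with
    | .plain a => [a]
    | .del a => [a]
    | .ins _ => []

/-- The projection `P^S : Σ_m* → Σ*` (`a, a_i ↦ a`, `a_d ↦ ε`). -/
def PSproj : List (Ev S) → List S := fun s =>
  s.flatMap fun e =>
    match e with
    | .plain a => [a]
    | .ins a => [a]
    | .del _ => []

/-- Natural projection `P_{ΣΣo}` erasing events not in `So`. -/
def projOn (So : Set S) (s : List S) : List S :=
  s.filter fun e => decide (e ∈ So)

/-- Membership of a tagged event in `Σ_{o,e} = Σ_o ∪ Σ_a^i ∪ Σ_a^d`. -/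
def inOe (So Sa : Set S) : Ev S → Prop
  | .plain a => a ∈ So
  | .ins a => a ∈ Sa
  | .del a => a ∈ Sa

/-- Natural projection `P_{Σ_mΣ_{o,e}}` erasing the unobservable events `Σ_uo`. -/
def projOe (So : Set S) : List (Ev S) → List (Ev S) := fun s =>
  s.flatMap fun e =>
    match e with
    | .plain a => if a ∈ So then [Ev.plain a] else []
    | e => [e]

/-- Transition function of the attacked plant `G_a` (over `Σ_m`):
`δ_{G_a}(x,e) = δ_G(x, P^G(e))`. -/
def δGa (Sa : Set S) (δG : XG → S → Option XG) : XG → Ev S → Option XG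
  | x, .plain a => δG x a
  | x, .del a => if a ∈ Sa then δG x a else none
  | x, .ins a => if a ∈ Sa then some x else none

/-- Active (legitimate) event set of a supervisor state. -/
def ΓR (δR : XR → S → Option XR) (y : XR) : Set S := {e | (δR y e).isSome}

/-- Transition function of the attacked supervisor `R_a` (over `Σ_m`). -/
def δRa (Sa : Set S) (δR : XR → S → Option XR) : XR → Ev S → Option XR
  | y, .plain a => δR y a
  | y, .ins a =>
      if a ∈ Sa then (if (δR y a).isSome then δR y a else some y) else none
  | y, .del a =>
      if a ∈ Sa then (if (δR y a).isSome then some y else none) else none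

/-- `R` is a supervisor realization: every uncontrollable event is enabled
everywhere and enabled unobservable events self-loop. -/
def IsSupRealization (So Suc : Set S) (δR : XR → S → Option XR) : Prop :=
  (∀ x e, e ∈ Suc → (δR x e).isSome) ∧
  (∀ x e, e ∉ So → (δR x e).isSome → δR x e = some x)

/-- `A` is an attack automaton over `Σ_{o,e}`: it is complete on `Σ_o \ Σ_a`,
for every `e ∈ Σ_a` either `e` or `e_d` is defined, and it is undefined outside
`Σ_{o,e}`. -/
def IsAttack (So Sa : Set S) (δA : XA → Ev S → Option XA) : Prop :=
  (∀ q a, a ∈ So → a ∉ Sa → (δA q (.plain a)).isSome) ∧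
  (∀ q a, a ∈ Sa → ((δA q (.plain a)).isSome ∨ (δA q (.del a)).isSome)) ∧
  (∀ q e, ¬ inOe So Sa e → δA q e = none)

/-- Transition function of the composition `G_a || R_a || A` over `Σ_m`:
all three components move on events of `Σ_{o,e}`, only `G_a` and `R_a` move on
unobservable events. -/
def δGRA (So Sa : Set S) (δG : XG → S → Option XG) (δR : XR → S → Option XR)
    (δA : XA → Ev S → Option XA) :
    XG × XR × XA → Ev S → Option (XG × XR × XA) := fun p e =>
  match e with
  | .plain a =>
    if a ∈ So then
      match δGa Sa δG p.1 (.plain a), δRa Sa δR p.2.1 (.plain a), δA p.2.2 (.plain a) with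
      | some x, some y, some z => some (x, y, z)
      | _, _, _ => none
    else
      match δGa Sa δG p.1 (.plain a), δRa Sa δR p.2.1 (.plain a) with
      | some x, some y => some (x, y, p.2.2)
      | _, _ => none
  | e =>
      match δGa Sa δG p.1 e, δRa Sa δR p.2.1 e, δA p.2.2 e with
      | some x, some y, some z => some (x, y, z)
      | _, _, _ => none

/-- Transition function of the composition `G_a || R_a` over `Σ_m`. -/
def δGaRa (Sa : Set S) (δG : XG → S → Option XG) (δR : XR → S → Option XR) :
    XG × XR → Ev S → Option (XG × XR) := fun p e =>
  match δGa Sa δG p.1 e, δRa Sa δR p.2 e with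
  | some x, some y => some (x, y)
  | _, _ => none

/-- `R` is robust w.r.t. `G`, `X_crit` and `A`:
`δ_G(x_{0,G}, s) ∉ X_crit` for every `s ∈ L(S_A/G) = P^G(L(G_a||R_a||A))`. -/
def Robust (So Sa : Set S) (Xcrit : Set XG)
    (δG : XG → S → Option XG) (x0G : XG)
    (δR : XR → S → Option XR) (x0R : XR)
    (δA : XA → Ev S → Option XA) (x0A : XA) : Prop :=
  ∀ t ∈ Lang (δGRA So Sa δG δR δA) (x0G, x0R, x0A),
    ∀ x, run δG x0G (PGproj t) = some x → x ∉ Xcrit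

/-- Total extension `Δ_R` of `δ_R` over observable strings. -/
def ΔRrun (δR : XR → S → Option XR) : XR → List S → XR
  | y, [] => y
  | y, e :: s => ΔRrun δR ((δR y e).getD y) s

/-- Control decision `C_R(s) = Γ_R(Δ_R(x_{0,R}, s))`. -/
def CR (δR : XR → S → Option XR) (x0R : XR) (s : List S) : Set S :=
  {e | (δR (ΔRrun δR x0R s) e).isSome}

/-- The state estimate under attack
`RE(s) = {x : x = δ_{G_a}(x_{0,G}, t), t ∈ P⁻¹_{Σ_mΣ_{o,e}}(s) ∩ L(G_a||R_a||A)}`. -/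
def RE (So Sa : Set S) (δG : XG → S → Option XG) (x0G : XG)
    (δR : XR → S → Option XR) (x0R : XR)
    (δA : XA → Ev S → Option XA) (x0A : XA) (s : List (Ev S)) : Set XG :=
  {x | ∃ t, projOe So t = s ∧ t ∈ Lang (δGRA So Sa δG δR δA) (x0G, x0R, x0A) ∧
        run (δGa Sa δG) x0G t = some x}

/-! ### The arena -/

/-- Unobservable reach `UR_γ(Q)`. -/
def URch (So : Set S) (δG : XG → S → Option XG) (γ : Set S) (Q : Set XG) : Set XG :=
  {x | ∃ t : List S, (∀ a ∈ t, a ∉ So ∧ a ∈ γ) ∧ ∃ q ∈ Q, run δG q t = some x}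

/-- Observable reach `NX_e(Q)`. -/
def NXr (δG : XG → S → Option XG) (a : S) (Q : Set XG) : Set XG :=
  {x | ∃ q ∈ Q, δG q a = some x}

/-- Active event set `Γ_G(Q)` of a set of plant states. -/
def ΓGset (δG : XG → S → Option XG) (Q : Set XG) : Set S :=
  {a | ∃ x ∈ Q, (δG x a).isSome}

/-- Player-1 states of the arena. -/
abbrev AQ1 (XG XA : Type) := Set XG × XA

/-- Player-2 states of the arena. -/
abbrev AQ2 (S XG XA : Type) := Set XG × XA × Set S × Option S

/-- Player-1 transition `h₁((S₁,S₂),γ) = (UR_γ(S₁), S₂, γ, ε)`. -/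
def h1 (So : Set S) (δG : XG → S → Option XG) (p : AQ1 XG XA) (γ : Set S) :
    AQ2 S XG XA :=
  (URch So δG γ p.1, p.2, γ, none)

/-- Player-2 transition `h₂`. -/
def h2 (So Sa : Set S) (δG : XG → S → Option XG) (δA : XA → Ev S → Option XA)
    (q : AQ2 S XG XA) : Ev S → Option (AQ1 XG XA ⊕ AQ2 S XG XA)
  | .plain a =>
    if a ∈ So then
      if q.2.2.2 = some a then some (Sum.inl (q.1, q.2.1))
      else if q.2.2.2 = none ∧ a ∈ ΓGset δG q.1 ∧ a ∈ q.2.2.1 then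
        (δA q.2.1 (.plain a)).map fun z => Sum.inl (NXr δG a q.1, z)
      else none
    else none
  | .ins a =>
    if a ∈ Sa ∧ q.2.2.2 = none then
      (δA q.2.1 (.ins a)).map fun z => Sum.inr (q.1, z, q.2.2.1, some a)
    else none
  | .del a =>
    if a ∈ Sa ∧ q.2.2.2 = none ∧ a ∈ ΓGset δG q.1 ∧ a ∈ q.2.2.1 then
      (δA q.2.1 (.del a)).map fun z =>
        Sum.inr (URch So δG q.2.2.1 (NXr δG a q.1), z, q.2.2.1, none)
    else none

/-- One-step map `H₂ : Q₂ × Σ_{o,e} × Γ ⇀ Q₂` of Definition 6. -/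
def H2 (So Sa : Set S) (δG : XG → S → Option XG) (δA : XA → Ev S → Option XA)
    (q : AQ2 S XG XA) : Ev S → Set S → Option (AQ2 S XG XA)
  | .plain a, γ =>
      (h2 So Sa δG δA q (.plain a)).bind fun r =>
        match r with
        | .inl p => some (h1 So δG p γ)
        | .inr _ => none
  | .del a, _ =>
      (h2 So Sa δG δA q (.del a)).bind fun r =>
        match r with
        | .inr q' => some q'
        | .inl _ => none
  | .ins a, γ =>
      (h2 So Sa δG δA q (.ins a)).bind fun r =>
        match r with
        | .inr q' =>
            (h2 So Sa δG δA q' (.plain a)).bind fun r2 =>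
              match r2 with
              | .inl p => some (h1 So δG p γ)
              | .inr _ => none
        | .inl _ => none

/-- Extension of `H₂` to strings with a sequence of control decisions. -/
def H2run (So Sa : Set S) (δG : XG → S → Option XG) (δA : XA → Ev S → Option XA) :
    AQ2 S XG XA → List (Ev S) → List (Set S) → Option (AQ2 S XG XA)
  | q, [], [] => some q
  | q, e :: s, γ :: γs =>
      (H2 So Sa δG δA q e γ).bind fun q' => H2run So Sa δG δA q' s γs
  | _, _ :: _, [] => none
  | _, [], _ :: _ => none

/-- The sequence of control decisions `γ_i = C_R(P^S(s^i))`, `i = 1, …, |s|`. -/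
def ctrlSeq (δR : XR → S → Option XR) (x0R : XR) (s : List (Ev S)) : List (Set S) :=
  (List.range s.length).map fun i => CR δR x0R (PSproj (s.take (i + 1)))

/-- Initial arena state `q₀ = ({x_{0,G}}, x_{0,A})`. -/
def arenaInit (x0G : XG) (x0A : XA) : AQ1 XG XA := ({x0G}, x0A)

/-- The arena `𝒜` regarded as a partial automaton over `E = Γ ∪ Σ_{o,e}`. -/
def δAr (So Suc Sa : Set S) (δG : XG → S → Option XG) (δA : XA → Ev S → Option XA) :
    (AQ1 XG XA ⊕ AQ2 S XG XA) → (Set S ⊕ Ev S) → Option (AQ1 XG XA ⊕ AQ2 S XG XA)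
  | .inl p, .inl γ => if Suc ⊆ γ then some (.inr (h1 So δG p γ)) else none
  | .inr q, .inr e => h2 So Sa δG δA q e
  | _, _ => none

/-- The projection `I₁` onto the plant state-estimate component. -/
def I1 : (AQ1 XG XA ⊕ AQ2 S XG XA) → Set XG := Sum.elim Prod.fst Prod.fst

/-- The projection `I₂` onto the attacker-state component. -/
def I2 : (AQ1 XG XA ⊕ AQ2 S XG XA) → XA := Sum.elim (fun p => p.2) (fun q => q.2.1)

/-- The language `L(𝒜)` of the arena. -/
def LA (So Suc Sa : Set S) (δG : XG → S → Option XG) (δA : XA → Ev S → Option XA)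
    (x0G : XG) (x0A : XA) : Set (List (Set S ⊕ Ev S)) :=
  Lang (δAr So Suc Sa δG δA) (Sum.inl (arenaInit x0G x0A))

/-- The language `L(𝒜^{trim})`: strings of `L(𝒜)` whose runs visit no state `q`
with `I₁(q) ∩ X_crit ≠ ∅`. -/
def LAtrim (So Suc Sa : Set S) (δG : XG → S → Option XG)
    (δA : XA → Ev S → Option XA) (x0G : XG) (x0A : XA) (Xcrit : Set XG) :
    Set (List (Set S ⊕ Ev S)) :=
  {s | s ∈ LA So Suc Sa δG δA x0G x0A ∧
    ∀ u, u <+: s → ∀ st, run (δAr So Suc Sa δG δA) (Sum.inl (arenaInit x0G x0A)) u =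
      some st → I1 st ∩ Xcrit = ∅}

/-- The controllable meta-events `E_c = Γ \ {Σ_uc}`. -/
def Ec (Suc : Set S) : Set (Set S ⊕ Ev S) :=
  {a | ∃ γ : Set S, a = Sum.inl γ ∧ Suc ⊆ γ ∧ γ ≠ Suc}

/-- `K` is controllable w.r.t. `L` and the uncontrollable events `Euc`. -/
def ControllableLang {E : Type} (L : Set (List E)) (Euc : Set E)
    (K : Set (List E)) : Prop :=
  ∀ s ∈ K, ∀ a ∈ Euc, s ++ [a] ∈ L → s ++ [a] ∈ K

/-- `K` is normal w.r.t. the projection `P` and `L`: `K = P⁻¹(P(K)) ∩ L`. -/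
def NormalLang {E : Type} (P : List E → List E) (L K : Set (List E)) : Prop :=
  K = {s | s ∈ L ∧ ∃ t ∈ K, P t = P s}

/-- Natural projection of meta-strings onto the observable meta-events
`E_o = E \ Σ_a^e`. -/
def projEo : List (Set S ⊕ Ev S) → List (Set S ⊕ Ev S) := fun s =>
  s.flatMap fun a =>
    match a with
    | Sum.inr (.ins _) => []
    | Sum.inr (.del _) => []
    | a => [a]

/-- `L(𝒜^{sup})`: the union of all sublanguages of `L(𝒜^{trim})` that are
controllable w.r.t. `L(𝒜)` and `E \ E_c` and normal w.r.t. `E_o` and `L(𝒜)`. -/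
def Lsup (So Suc Sa : Set S) (δG : XG → S → Option XG)
    (δA : XA → Ev S → Option XA) (x0G : XG) (x0A : XA) (Xcrit : Set XG) :
    Set (List (Set S ⊕ Ev S)) :=
  ⋃₀ {K | K ⊆ LAtrim So Suc Sa δG δA x0G x0A Xcrit ∧
      ControllableLang (LA So Suc Sa δG δA x0G x0A) (Ec Suc)ᶜ K ∧
      NormalLang projEo (LA So Suc Sa δG δA x0G x0A) K}

/-- The run word `W(s; γ₀, …, γ_{|s|})` in the arena. -/
def Wword (γ0 : Set S) (s : List (Ev S)) (γs : List (Set S)) :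
    List (Set S ⊕ Ev S) :=
  Sum.inl γ0 :: (s.zip γs).flatMap fun p =>
    match p.1 with
    | .plain a => [Sum.inr (Ev.plain a), Sum.inl p.2]
    | .del a => [Sum.inr (Ev.del a)]
    | .ins a => [Sum.inr (Ev.ins a), Sum.inr (Ev.plain a), Sum.inl p.2]

/-- The projection `η : E* → Σ_o*` erasing all meta-events not in `Σ_o`. -/
def ηproj (So : Set S) : List (Set S ⊕ Ev S) → List S := fun s =>
  s.flatMap fun a =>
    match a with
    | Sum.inr (.plain e) => if e ∈ So then [e] else []
    | _ => []


/-- The all-out attack strategy: a single state with every event of `Σ_{o,e}`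
defined (as a self-loop). -/
def allOutδ (So Sa : Set S) : Unit → Ev S → Option Unit := fun _ e =>
  if inOe So Sa e then some () else none

/-- The supervisor extracted from a generator of `L(𝒜^{sup})` by a choice
function `c` of control decisions (Algorithm 1): on an observable enabled event
follow the arena (choose `c y`, then the event), on an unobservable enabled
event self-loop, and disable events outside `c y`. -/
def extractR {Y : Type} (So : Set S) (δg : Y → (Set S ⊕ Ev S) → Option Y)
    (c : Y → Set S) : Y → S → Option Y := fun y a =>
  if a ∈ c y then
    if a ∈ So then
      some (((δg y (Sum.inl (c y))).bind fun y' =>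
        δg y' (Sum.inr (Ev.plain a))).getD y)
    else some y
  else none

/-- The language `L_R` built inductively from a supervisor `R` inside the arena:
`ε ∈ L_R`; from a player-2 state every event of `Σ_{o,e}` feasible in `𝒜` may be
appended; from a player-1 state the control decisions `Σ_uc` and `C_R(η(s))`
may be appended. -/
inductive LRmem {S XG XA XR : Type} (So Suc Sa : Set S)
    (δG : XG → S → Option XG) (x0G : XG)
    (δA : XA → Ev S → Option XA) (x0A : XA)
    (δR : XR → S → Option XR) (x0R : XR) : List (Set S ⊕ Ev S) → Prop
  | nil : LRmem So Suc Sa δG x0G δA x0A δR x0R []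
  | p2 (s : List (Set S ⊕ Ev S)) (q : AQ2 S XG XA) (e : Ev S) :
      LRmem So Suc Sa δG x0G δA x0A δR x0R s →
      run (δAr So Suc Sa δG δA) (Sum.inl (arenaInit x0G x0A)) s = some (Sum.inr q) →
      inOe So Sa e →
      (run (δAr So Suc Sa δG δA) (Sum.inl (arenaInit x0G x0A))
        (s ++ [Sum.inr e])).isSome →
      LRmem So Suc Sa δG x0G δA x0A δR x0R (s ++ [Sum.inr e])
  | p1uc (s : List (Set S ⊕ Ev S)) (p : AQ1 XG XA) :
      LRmem So Suc Sa δG x0G δA x0A δR x0R s →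
      run (δAr So Suc Sa δG δA) (Sum.inl (arenaInit x0G x0A)) s = some (Sum.inl p) →
      LRmem So Suc Sa δG x0G δA x0A δR x0R (s ++ [Sum.inl Suc])
  | p1R (s : List (Set S ⊕ Ev S)) (p : AQ1 XG XA) :
      LRmem So Suc Sa δG x0G δA x0A δR x0R s →
      run (δAr So Suc Sa δG δA) (Sum.inl (arenaInit x0G x0A)) s = some (Sum.inl p) →
      LRmem So Suc Sa δG x0G δA x0A δR x0R (s ++ [Sum.inl (CR δR x0R (ηproj So s))])

section Aux
variable {S XG XR XA : Type}

theorem run_append {X E : Type} (δ : X → E → Option X) (x : X) (s t : List E) :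
    run δ x (s ++ t) = (run δ x s).bind fun y => run δ y t := by
  induction s generalizing x with
  | nil => simp [run]
  | cons e s ih => cases h : δ x e <;> simp [run, h, ih]

theorem run_snoc {X E : Type} (δ : X → E → Option X) (x : X) (s : List E) (e : E) :
    run δ x (s ++ [e]) = (run δ x s).bind fun y => δ y e := by
  rw [run_append]; cases run δ x s <;> simp [run]

theorem lang_prefix {X E : Type} {δ : X → E → Option X} {x0 : X} {s t : List E}
    (h : t ∈ Lang δ x0) (hp : s <+: t) : s ∈ Lang δ x0 := by
  obtain ⟨r, rfl⟩ := hp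
  simp only [Lang, Set.mem_setOf_eq, run_append] at h ⊢
  cases h' : run δ x0 s
  · rw [h'] at h; simp at h
  · simp

theorem ΔRrun_append (δR : XR → S → Option XR) (y : XR) (s t : List S) :
    ΔRrun δR y (s ++ t) = ΔRrun δR (ΔRrun δR y s) t := by
  induction s generalizing y with
  | nil => simp [ΔRrun]
  | cons a s ih => simp [ΔRrun, ih]

theorem projOe_append (So : Set S) (s t : List (Ev S)) :
    projOe So (s ++ t) = projOe So s ++ projOe So t := List.flatMap_append

theorem PSproj_append (s t : List (Ev S)) :
    PSproj (s ++ t) = PSproj s ++ PSproj t := List.flatMap_append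

theorem PGproj_append (s t : List (Ev S)) :
    PGproj (s ++ t) = PGproj s ++ PGproj t := List.flatMap_append

theorem ηproj_append (So : Set S) (s t : List (Set S ⊕ Ev S)) :
    ηproj So (s ++ t) = ηproj So s ++ ηproj So t := List.flatMap_append

theorem projEo_append (s t : List (Set S ⊕ Ev S)) :
    projEo (s ++ t) = projEo s ++ projEo t := List.flatMap_append

theorem ctrlSeq_length (δR : XR → S → Option XR) (x0R : XR) (s : List (Ev S)) :
    (ctrlSeq δR x0R s).length = s.length := by simp [ctrlSeq]

theorem ctrlSeq_snoc (δR : XR → S → Option XR) (x0R : XR) (s : List (Ev S)) (e : Ev S) :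
    ctrlSeq δR x0R (s ++ [e]) = ctrlSeq δR x0R s ++ [CR δR x0R (PSproj (s ++ [e]))] := by
  simp only [ctrlSeq, List.length_append, List.length_singleton, List.range_succ,
    List.map_append, List.map_cons, List.map_nil]
  congr 1
  · apply List.map_congr_left; intro i hi
    simp only [List.mem_range] at hi
    rw [List.take_append_of_le_length (by omega)]
  · rw [List.take_of_length_le (by simp)]

theorem Wword_snoc (γ0 γ : Set S) (s : List (Ev S)) (γs : List (Set S))
    (h : s.length = γs.length) (e : Ev S) :
    Wword γ0 (s ++ [e]) (γs ++ [γ]) =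
      Wword γ0 s γs ++ (match e with
        | .plain a => [Sum.inr (Ev.plain a), Sum.inl γ]
        | .del a => [Sum.inr (Ev.del a)]
        | .ins a => [Sum.inr (Ev.ins a), Sum.inr (Ev.plain a), Sum.inl γ]) := by
  cases e <;> simp [Wword, List.zip_append h, List.flatMap_append]

end Aux
section Aux2
variable {S XG XR XA : Type}
variable {So Suc Sa : Set S} {δG : XG → S → Option XG} {δR : XR → S → Option XR}
  {δA : XA → Ev S → Option XA}

theorem projOe_cons_plain_mem {So : Set S} {a : S} (ha : a ∈ So) (t : List (Ev S)) :
    projOe So (.plain a :: t) = .plain a :: projOe So t := by simp [projOe, ha]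

theorem projOe_cons_plain_not {So : Set S} {a : S} (ha : a ∉ So) (t : List (Ev S)) :
    projOe So (.plain a :: t) = projOe So t := by simp [projOe, ha]

theorem projOe_cons_ins (So : Set S) (a : S) (t : List (Ev S)) :
    projOe So (.ins a :: t) = .ins a :: projOe So t := by simp [projOe]

theorem projOe_cons_del (So : Set S) (a : S) (t : List (Ev S)) :
    projOe So (.del a :: t) = .del a :: projOe So t := by simp [projOe]

theorem δRa_ins_eq {a : S} (ha : a ∈ Sa) (y : XR) :
    δRa Sa δR y (.ins a) = some ((δR y a).getD y) := by
  simp only [δRa, if_pos ha]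
  cases h : δR y a <;> simp [h]

theorem δGRA_plain_obs {a : S} (ha : a ∈ So) (p r : XG × XR × XA) :
    δGRA So Sa δG δR δA p (.plain a) = some r ↔
      δG p.1 a = some r.1 ∧ δR p.2.1 a = some r.2.1 ∧ δA p.2.2 (.plain a) = some r.2.2 := by
  obtain ⟨r1, r2, r3⟩ := r
  simp only [δGRA, if_pos ha, δGa, δRa]
  cases h1 : δG p.1 a <;> cases h2 : δR p.2.1 a <;> cases h3 : δA p.2.2 (.plain a) <;>
    simp [Prod.ext_iff, and_assoc, eq_comm]

theorem δGRA_plain_unobs {a : S} (ha : a ∉ So) (p r : XG × XR × XA) :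
    δGRA So Sa δG δR δA p (.plain a) = some r ↔
      δG p.1 a = some r.1 ∧ δR p.2.1 a = some r.2.1 ∧ r.2.2 = p.2.2 := by
  obtain ⟨r1, r2, r3⟩ := r
  simp only [δGRA, if_neg ha, δGa, δRa]
  cases h1 : δG p.1 a <;> cases h2 : δR p.2.1 a <;>
    simp [Prod.ext_iff, and_assoc, eq_comm]

theorem δGRA_ins {a : S} (p r : XG × XR × XA) :
    δGRA So Sa δG δR δA p (.ins a) = some r ↔
      a ∈ Sa ∧ r.1 = p.1 ∧ r.2.1 = (δR p.2.1 a).getD p.2.1 ∧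
        δA p.2.2 (.ins a) = some r.2.2 := by
  obtain ⟨r1, r2, r3⟩ := r
  by_cases ha : a ∈ Sa
  · simp only [δGRA, δGa, if_pos ha, δRa_ins_eq ha]
    cases h3 : δA p.2.2 (.ins a) <;> simp [ha, Prod.ext_iff, and_assoc, eq_comm]
  · simp [δGRA, δGa, if_neg ha, ha]

theorem δGRA_del {a : S} (p r : XG × XR × XA) :
    δGRA So Sa δG δR δA p (.del a) = some r ↔
      a ∈ Sa ∧ δG p.1 a = some r.1 ∧ (δR p.2.1 a).isSome ∧ r.2.1 = p.2.1 ∧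
        δA p.2.2 (.del a) = some r.2.2 := by
  obtain ⟨r1, r2, r3⟩ := r
  by_cases ha : a ∈ Sa
  · simp only [δGRA, δGa, δRa, if_pos ha]
    cases h1 : δG p.1 a <;> cases h2 : δR p.2.1 a <;>
      cases h3 : δA p.2.2 (.del a) <;>
      simp [ha, Prod.ext_iff, and_assoc, eq_comm]
  · simp [δGRA, δGa, if_neg ha, ha]

theorem GRA_components :
    ∀ (t : List (Ev S)) (p r : XG × XR × XA),
      run (δGRA So Sa δG δR δA) p t = some r →
      run (δGa Sa δG) p.1 t = some r.1 ∧ run (δRa Sa δR) p.2.1 t = some r.2.1 ∧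
        run δA p.2.2 (projOe So t) = some r.2.2 := by
  intro t
  induction t with
  | nil => intro p r h; simp_all [run, projOe]
  | cons e t ih =>
      intro p r h
      simp only [run] at h
      obtain ⟨p', hp', hrest⟩ := Option.bind_eq_some_iff.mp h
      obtain ⟨h1, h2, h3⟩ := ih p' r hrest
      cases e with
      | plain a =>
          by_cases ha : a ∈ So
          · obtain ⟨g1, g2, g3⟩ := (δGRA_plain_obs ha p p').mp hp'
            refine ⟨?_, ?_, ?_⟩
            · simp [run, δGa, g1, h1]
            · simp [run, δRa, g2, h2]
            · rw [projOe_cons_plain_mem ha]; simp [run, g3, h3]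
          · obtain ⟨g1, g2, g3⟩ := (δGRA_plain_unobs ha p p').mp hp'
            refine ⟨?_, ?_, ?_⟩
            · simp [run, δGa, g1, h1]
            · simp [run, δRa, g2, h2]
            · rw [projOe_cons_plain_not ha]; exact g3 ▸ h3
      | ins a =>
          obtain ⟨ha, g1, g2, g3⟩ := (δGRA_ins p p').mp hp'
          refine ⟨?_, ?_, ?_⟩
          · simp [run, δGa, ha, g1 ▸ h1]
          · simp [run, δRa_ins_eq ha, ← g2, h2]
          · rw [projOe_cons_ins]; simp [run, g3, h3]
      | del a =>
          obtain ⟨ha, g1, g2, g3, g4⟩ := (δGRA_del p p').mp hp'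
          refine ⟨?_, ?_, ?_⟩
          · simp [run, δGa, ha, g1, h1]
          · simp only [run, δRa, if_pos ha, if_pos g2]
            simp [← g3, h2]
          · rw [projOe_cons_del]; simp [run, g4, h3]

end Aux2
section Aux3
variable {S XG XR XA : Type}
variable {So Suc Sa : Set S} {δG : XG → S → Option XG} {δR : XR → S → Option XR}
  {δA : XA → Ev S → Option XA}

theorem Suc_sub_CR {x0R : XR} (hR : IsSupRealization So Suc δR) (v : List S) :
    Suc ⊆ CR δR x0R v := fun e he => hR.1 _ e he

theorem Ra_run_ΔRrun (hR : IsSupRealization So Suc δR) :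
    ∀ (t : List (Ev S)) (y0 y : XR), run (δRa Sa δR) y0 t = some y →
      y = ΔRrun δR y0 (PSproj (projOe So t)) := by
  intro t
  induction t with
  | nil => intro y0 y h; simp_all [run, projOe, PSproj, ΔRrun]
  | cons e t ih =>
      intro y0 y h
      simp only [run] at h
      obtain ⟨y1, hy1, hrest⟩ := Option.bind_eq_some_iff.mp h
      cases e with
      | plain a =>
          simp only [δRa] at hy1
          by_cases ha : a ∈ So
          · rw [projOe_cons_plain_mem ha]
            have : PSproj (Ev.plain a :: projOe So t) = a :: PSproj (projOe So t) := by
              simp [PSproj]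
            rw [this, ΔRrun, hy1]
            simpa using ih y1 y hrest
          · rw [projOe_cons_plain_not ha]
            have : y1 = y0 := by
              have := hR.2 y0 a ha (by simp [hy1])
              rw [hy1] at this; exact (Option.some_inj.mp this)
            exact this ▸ ih y1 y hrest
      | ins a =>
          have ha : a ∈ Sa := by
            by_contra hc; simp [δRa, hc] at hy1
          rw [δRa_ins_eq ha] at hy1
          rw [projOe_cons_ins]
          have : PSproj (Ev.ins a :: projOe So t) = a :: PSproj (projOe So t) := by
            simp [PSproj]
          rw [this, ΔRrun, Option.some_inj.mp hy1]
          exact ih y1 y hrest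
      | del a =>
          have ha : a ∈ Sa := by
            by_contra hc; simp [δRa, hc] at hy1
          simp only [δRa, if_pos ha] at hy1
          have hy : y1 = y0 := by
            by_cases hs : (δR y0 a).isSome <;> simp [hs] at hy1; exact hy1.symm
          rw [projOe_cons_del]
          have : PSproj (Ev.del a :: projOe So t) = PSproj (projOe So t) := by
            simp [PSproj]
          rw [this]
          exact hy ▸ ih y1 y hrest

theorem Ga_run_PG :
    ∀ (t : List (Ev S)) (x0 x : XG), run (δGa Sa δG) x0 t = some x →
      run δG x0 (PGproj t) = some x := by
  intro t
  induction t with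
  | nil => intro x0 x h; simp_all [run, PGproj]
  | cons e t ih =>
      intro x0 x h
      simp only [run] at h
      obtain ⟨x1, hx1, hrest⟩ := Option.bind_eq_some_iff.mp h
      cases e with
      | plain a =>
          simp only [δGa] at hx1
          have : PGproj (Ev.plain a :: t) = a :: PGproj t := by simp [PGproj]
          rw [this]; simp [run, hx1, ih x1 x hrest]
      | ins a =>
          have ha : a ∈ Sa := by by_contra hc; simp [δGa, hc] at hx1
          simp only [δGa, if_pos ha, Option.some_inj] at hx1
          have : PGproj (Ev.ins a :: t) = PGproj t := by simp [PGproj]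
          rw [this]; exact hx1 ▸ ih x1 x hrest
      | del a =>
          have ha : a ∈ Sa := by by_contra hc; simp [δGa, hc] at hx1
          simp only [δGa, if_pos ha] at hx1
          have : PGproj (Ev.del a :: t) = a :: PGproj t := by simp [PGproj]
          rw [this]; simp [run, hx1, ih x1 x hrest]

theorem projOe_map_plain {So : Set S} :
    ∀ (w : List S), (∀ a ∈ w, a ∉ So) → projOe So (w.map .plain) = [] := by
  intro w
  induction w with
  | nil => intro _; simp [projOe]
  | cons a w ih =>
      intro h
      rw [List.map_cons, projOe_cons_plain_not (h a (by simp))]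
      exact ih fun b hb => h b (by simp [hb])

theorem uext (hR : IsSupRealization So Suc δR) :
    ∀ (w : List S) (x x' : XG) (y : XR) (z : XA),
      (∀ a ∈ w, a ∉ So ∧ (δR y a).isSome) → run δG x w = some x' →
      run (δGRA So Sa δG δR δA) (x, y, z) (w.map .plain) = some (x', y, z) := by
  intro w
  induction w with
  | nil => intro x x' y z _ h; simp_all [run]
  | cons a w ih =>
      intro x x' y z hw h
      simp only [run] at h
      obtain ⟨x1, hx1, hrest⟩ := Option.bind_eq_some_iff.mp h
      have ha := hw a (by simp)
      have hya : δR y a = some y := by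
        have := hR.2 y a ha.1 ha.2
        exact this
      rw [List.map_cons]
      simp only [run]
      rw [(δGRA_plain_unobs ha.1 (x, y, z) (x1, y, z)).mpr ⟨hx1, hya, rfl⟩]
      simpa using ih x1 x' y z (fun b hb => hw b (by simp [hb])) hrest

theorem mem_URch_self {γ : Set S} {Q : Set XG} : Q ⊆ URch So δG γ Q :=
  fun x hx => ⟨[], by simp, x, hx, by simp [run]⟩

theorem URch_trans {γ : Set S} {Q : Set XG} :
    URch So δG γ (URch So δG γ Q) ⊆ URch So δG γ Q := by
  rintro x ⟨w2, hw2, q1, ⟨w1, hw1, q0, hq0, hr1⟩, hr2⟩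
  refine ⟨w1 ++ w2, ?_, q0, hq0, ?_⟩
  · intro a ha; rcases List.mem_append.mp ha with h | h
    exacts [hw1 a h, hw2 a h]
  · rw [run_append, hr1]; simpa using hr2

theorem URch_step {γ : Set S} {Q : Set XG} {x x' : XG} {a : S}
    (hx : x ∈ URch So δG γ Q) (ha : a ∉ So) (haγ : a ∈ γ) (h : δG x a = some x') :
    x' ∈ URch So δG γ Q := by
  obtain ⟨w, hw, q, hq, hr⟩ := hx
  refine ⟨w ++ [a], ?_, q, hq, ?_⟩
  · intro b hb; rcases List.mem_append.mp hb with h' | h'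
    · exact hw b h'
    · simp at h'; subst h'; exact ⟨ha, haγ⟩
  · rw [run_snoc, hr]; simp [h]

end Aux3
section Aux4
variable {S XG XR XA : Type}
variable {So Suc Sa : Set S} {δG : XG → S → Option XG} {δR : XR → S → Option XR}
  {δA : XA → Ev S → Option XA}

theorem δAr_inl_inl {p : AQ1 XG XA} {γ : Set S} (h : Suc ⊆ γ) :
    δAr So Suc Sa δG δA (Sum.inl p) (Sum.inl γ) = some (Sum.inr (h1 So δG p γ)) := by
  simp [δAr, h]

theorem δAr_inl_inv {p : AQ1 XG XA} {c : Set S ⊕ Ev S} {st : AQ1 XG XA ⊕ AQ2 S XG XA}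
    (h : δAr So Suc Sa δG δA (Sum.inl p) c = some st) :
    ∃ γ, c = Sum.inl γ ∧ Suc ⊆ γ ∧ st = Sum.inr (h1 So δG p γ) := by
  cases c with
  | inl γ =>
      refine ⟨γ, rfl, ?_⟩
      by_cases hγ : Suc ⊆ γ
      · simp [δAr, hγ] at h; exact ⟨hγ, h.symm⟩
      · simp [δAr, hγ] at h
  | inr e => simp [δAr] at h

theorem δAr_inr_inv {q : AQ2 S XG XA} {c : Set S ⊕ Ev S} {st : AQ1 XG XA ⊕ AQ2 S XG XA}
    (h : δAr So Suc Sa δG δA (Sum.inr q) c = some st) :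
    ∃ e, c = Sum.inr e ∧ h2 So Sa δG δA q e = some st := by
  cases c with
  | inl γ => simp [δAr] at h
  | inr e => exact ⟨e, rfl, h⟩

theorem h2_plain_match {q : AQ2 S XG XA} {a : S} (ha : a ∈ So) (hσ : q.2.2.2 = some a) :
    h2 So Sa δG δA q (.plain a) = some (Sum.inl (q.1, q.2.1)) := by
  simp [h2, ha, hσ]

theorem h2_plain_new {q : AQ2 S XG XA} {a : S} {z : XA} (ha : a ∈ So)
    (hσ : q.2.2.2 = none) (hg : a ∈ ΓGset δG q.1) (hγ : a ∈ q.2.2.1)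
    (hz : δA q.2.1 (.plain a) = some z) :
    h2 So Sa δG δA q (.plain a) = some (Sum.inl (NXr δG a q.1, z)) := by
  simp [h2, ha, hσ, hg, hγ, hz]

theorem h2_ins_eq {q : AQ2 S XG XA} {a : S} {z : XA} (ha : a ∈ Sa)
    (hσ : q.2.2.2 = none) (hz : δA q.2.1 (.ins a) = some z) :
    h2 So Sa δG δA q (.ins a) = some (Sum.inr (q.1, z, q.2.2.1, some a)) := by
  simp [h2, ha, hσ, hz]

theorem h2_del_eq {q : AQ2 S XG XA} {a : S} {z : XA} (ha : a ∈ Sa)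
    (hσ : q.2.2.2 = none) (hg : a ∈ ΓGset δG q.1) (hγ : a ∈ q.2.2.1)
    (hz : δA q.2.1 (.del a) = some z) :
    h2 So Sa δG δA q (.del a) =
      some (Sum.inr (URch So δG q.2.2.1 (NXr δG a q.1), z, q.2.2.1, none)) := by
  simp [h2, ha, hσ, hg, hγ, hz]

theorem h2_plain_inv {q : AQ2 S XG XA} {a : S} {st : AQ1 XG XA ⊕ AQ2 S XG XA}
    (h : h2 So Sa δG δA q (.plain a) = some st) :
    a ∈ So ∧ ((q.2.2.2 = some a ∧ st = Sum.inl (q.1, q.2.1)) ∨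
      (q.2.2.2 = none ∧ a ∈ ΓGset δG q.1 ∧ a ∈ q.2.2.1 ∧
        ∃ z, δA q.2.1 (.plain a) = some z ∧ st = Sum.inl (NXr δG a q.1, z))) := by
  by_cases ha : a ∈ So
  · refine ⟨ha, ?_⟩
    by_cases hσ : q.2.2.2 = some a
    · left; rw [h2_plain_match ha hσ] at h
      exact ⟨hσ, (Option.some_inj.mp h).symm⟩
    · right
      simp only [h2, if_pos ha, if_neg hσ] at h
      by_cases hc : q.2.2.2 = none ∧ a ∈ ΓGset δG q.1 ∧ a ∈ q.2.2.1
      · rw [if_pos hc] at h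
        obtain ⟨z, hz, hst⟩ := Option.map_eq_some_iff.mp h
        exact ⟨hc.1, hc.2.1, hc.2.2, z, hz, hst.symm⟩
      · rw [if_neg hc] at h; exact absurd h (by simp)
  · simp [h2, ha] at h

theorem h2_ins_inv {q : AQ2 S XG XA} {a : S} {st : AQ1 XG XA ⊕ AQ2 S XG XA}
    (h : h2 So Sa δG δA q (.ins a) = some st) :
    a ∈ Sa ∧ q.2.2.2 = none ∧
      ∃ z, δA q.2.1 (.ins a) = some z ∧ st = Sum.inr (q.1, z, q.2.2.1, some a) := by
  by_cases hc : a ∈ Sa ∧ q.2.2.2 = none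
  · simp only [h2, if_pos hc] at h
    obtain ⟨z, hz, hst⟩ := Option.map_eq_some_iff.mp h
    exact ⟨hc.1, hc.2, z, hz, hst.symm⟩
  · simp [h2, hc] at h

theorem h2_del_inv {q : AQ2 S XG XA} {a : S} {st : AQ1 XG XA ⊕ AQ2 S XG XA}
    (h : h2 So Sa δG δA q (.del a) = some st) :
    a ∈ Sa ∧ q.2.2.2 = none ∧ a ∈ ΓGset δG q.1 ∧ a ∈ q.2.2.1 ∧
      ∃ z, δA q.2.1 (.del a) = some z ∧
        st = Sum.inr (URch So δG q.2.2.1 (NXr δG a q.1), z, q.2.2.1, none) := by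
  by_cases hc : a ∈ Sa ∧ q.2.2.2 = none ∧ a ∈ ΓGset δG q.1 ∧ a ∈ q.2.2.1
  · simp only [h2, if_pos hc] at h
    obtain ⟨z, hz, hst⟩ := Option.map_eq_some_iff.mp h
    exact ⟨hc.1, hc.2.1, hc.2.2.1, hc.2.2.2, z, hz, hst.symm⟩
  · simp [h2, hc] at h

theorem h2_inOe {q : AQ2 S XG XA} {e : Ev S} {st : AQ1 XG XA ⊕ AQ2 S XG XA}
    (h : h2 So Sa δG δA q e = some st) : inOe So Sa e := by
  cases e with
  | plain a => exact (h2_plain_inv h).1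
  | ins a => exact (h2_ins_inv h).1
  | del a => exact (h2_del_inv h).1

theorem LRmem_lang {x0G : XG} {x0A : XA} {x0R : XR} (hR : IsSupRealization So Suc δR) :
    ∀ {u}, LRmem So Suc Sa δG x0G δA x0A δR x0R u →
      (run (δAr So Suc Sa δG δA) (Sum.inl (arenaInit x0G x0A)) u).isSome := by
  intro u hu
  induction hu with
  | nil => simp [run]
  | p2 s q e _ _ _ hsome _ => exact hsome
  | p1uc s p _ hrun _ =>
      rw [run_snoc, hrun]
      simp [δAr_inl_inl (le_refl Suc)]
  | p1R s p _ hrun _ =>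
      rw [run_snoc, hrun]
      simp [δAr_inl_inl (Suc_sub_CR hR _)]

theorem LRmem_prefix {x0G : XG} {x0A : XA} {x0R : XR} :
    ∀ {u}, LRmem So Suc Sa δG x0G δA x0A δR x0R u →
      ∀ {v}, v <+: u → LRmem So Suc Sa δG x0G δA x0A δR x0R v := by
  intro u hu
  induction hu with
  | nil => intro v hv; rw [List.prefix_nil.mp hv]; exact LRmem.nil
  | p2 s q e hs hrun hoe hsome ih =>
      intro v hv
      rcases List.prefix_concat_iff.mp hv with h | h
      · rw [h]; exact LRmem.p2 s q e hs hrun hoe hsome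
      · exact ih h
  | p1uc s p hs hrun ih =>
      intro v hv
      rcases List.prefix_concat_iff.mp hv with h | h
      · rw [h]; exact LRmem.p1uc s p hs hrun
      · exact ih h
  | p1R s p hs hrun ih =>
      intro v hv
      rcases List.prefix_concat_iff.mp hv with h | h
      · rw [h]; exact LRmem.p1R s p hs hrun
      · exact ih h

end Aux4
section Conv
variable {S XG XR XA : Type}
variable {So Suc Sa : Set S} {δG : XG → S → Option XG} {x0G : XG}
  {δR : XR → S → Option XR} {x0R : XR} {δA : XA → Ev S → Option XA} {x0A : XA}

/-- A witness for a plant-state estimate in the arena: every estimated plant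
state is realized by an attacked closed-loop string with matching attacker
state and supervisor observation. -/
def Witness (So Sa : Set S) (δG : XG → S → Option XG) (x0G : XG)
    (δR : XR → S → Option XR) (x0R : XR) (δA : XA → Ev S → Option XA) (x0A : XA)
    (S1 : Set XG) (S2 : XA) (v : List S) : Prop :=
  ∀ x ∈ S1, ∃ t, (run (δGRA So Sa δG δR δA) (x0G, x0R, x0A) t).isSome ∧
    run (δGa Sa δG) x0G t = some x ∧ run δA x0A (projOe So t) = some S2 ∧
    PSproj (projOe So t) = v

theorem witness_elim (hR : IsSupRealization So Suc δR)
    {S1 : Set XG} {S2 : XA} {v : List S}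
    (hW : Witness So Sa δG x0G δR x0R δA x0A S1 S2 v) {x : XG} (hx : x ∈ S1) :
    ∃ (t : List (Ev S)) (r : XG × XR × XA), run (δGRA So Sa δG δR δA) (x0G, x0R, x0A) t = some r ∧
      r.1 = x ∧ r.2.2 = S2 ∧ r.2.1 = ΔRrun δR x0R v ∧
      run δA x0A (projOe So t) = some S2 ∧ PSproj (projOe So t) = v := by
  obtain ⟨t, htS, htg, hta, htv⟩ := hW x hx
  obtain ⟨r, hr⟩ := Option.isSome_iff_exists.mp htS
  obtain ⟨h1, h2, h3⟩ := GRA_components t _ r hr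
  refine ⟨t, r, hr, ?_, ?_, ?_, hta, htv⟩
  · rw [h1] at htg; exact Option.some_inj.mp htg
  · rw [h3] at hta; exact Option.some_inj.mp hta
  · rw [Ra_run_ΔRrun hR t _ _ h2, htv]

theorem witness_UR (hR : IsSupRealization So Suc δR)
    {S1 : Set XG} {S2 : XA} {v : List S} {γ : Set S}
    (hγ : ∀ e ∈ γ, (δR (ΔRrun δR x0R v) e).isSome)
    (hW : Witness So Sa δG x0G δR x0R δA x0A S1 S2 v) :
    Witness So Sa δG x0G δR x0R δA x0A (URch So δG γ S1) S2 v := by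
  rintro x'' ⟨w, hw, q, hq, hr⟩
  obtain ⟨t, r, hrun, hr1, hr2, hr3, hta, htv⟩ := witness_elim hR hW hq
  have hstep : run (δGRA So Sa δG δR δA) r (w.map .plain) = some (x'', r.2.1, r.2.2) := by
    have : r = (q, r.2.1, r.2.2) := by
      rw [← hr1]
    rw [this]
    exact uext hR w q x'' r.2.1 r.2.2
      (fun a ha => ⟨(hw a ha).1, by rw [hr3]; exact hγ a (hw a ha).2⟩) hr
  have htot : run (δGRA So Sa δG δR δA) (x0G, x0R, x0A) (t ++ w.map .plain) =
      some (x'', r.2.1, r.2.2) := by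
    rw [run_append, hrun]; simpa using hstep
  have hproj : projOe So (t ++ w.map .plain) = projOe So t := by
    rw [projOe_append, projOe_map_plain w (fun a ha => (hw a ha).1)]; simp
  obtain ⟨g1, _, _⟩ := GRA_components _ _ _ htot
  exact ⟨t ++ w.map .plain, by simp [htot], g1, by rw [hproj]; exact hta,
    by rw [hproj, htv]⟩

/-- The inductive invariant of the converse simulation. -/
def ConvInv (So Sa : Set S) (δG : XG → S → Option XG) (x0G : XG)
    (δR : XR → S → Option XR) (x0R : XR) (δA : XA → Ev S → Option XA) (x0A : XA)
    (u : List (Set S ⊕ Ev S)) : (AQ1 XG XA ⊕ AQ2 S XG XA) → Prop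
  | Sum.inl p => Witness So Sa δG x0G δR x0R δA x0A p.1 p.2 (ηproj So u)
  | Sum.inr q =>
      (q.2.2.2 = none → Witness So Sa δG x0G δR x0R δA x0A q.1 q.2.1 (ηproj So u) ∧
        ∀ e ∈ q.2.2.1, (δR (ΔRrun δR x0R (ηproj So u)) e).isSome) ∧
      ∀ a, q.2.2.2 = some a →
        Witness So Sa δG x0G δR x0R δA x0A q.1 q.2.1 (ηproj So u ++ [a])

theorem conv (hSa : Sa ⊆ So) (hR : IsSupRealization So Suc δR) :
    ∀ {u}, LRmem So Suc Sa δG x0G δA x0A δR x0R u →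
      ∀ st, run (δAr So Suc Sa δG δA) (Sum.inl (arenaInit x0G x0A)) u = some st →
        ConvInv So Sa δG x0G δR x0R δA x0A u st := by
  intro u hu
  induction hu with
  | nil =>
      intro st hst
      simp only [run, Option.some_inj] at hst
      subst hst
      intro x hx
      simp only [arenaInit, Set.mem_singleton_iff] at hx
      subst hx
      exact ⟨[], by simp [run], by simp [run, arenaInit], by simp [run, projOe, arenaInit],
        by simp [projOe, PSproj, ηproj]⟩
  | p1uc s p hs hrun ih =>
      intro st hst
      rw [run_snoc, hrun] at hst
      simp only [Option.bind_some] at hst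
      rw [δAr_inl_inl (le_refl Suc)] at hst
      obtain rfl := Option.some_inj.mp hst.symm
      have hη : ηproj So (s ++ [Sum.inl Suc]) = ηproj So s := by
        rw [ηproj_append]; simp [ηproj]
      constructor
      · intro _
        rw [hη]
        exact ⟨witness_UR hR (fun e he => hR.1 _ e he) (ih _ hrun),
          fun e he => hR.1 _ e he⟩
      · intro a ha; exact absurd (show (none : Option S) = some a from ha) (by simp)
  | p1R s p hs hrun ih =>
      intro st hst
      rw [run_snoc, hrun] at hst
      simp only [Option.bind_some] at hst
      rw [δAr_inl_inl (Suc_sub_CR hR _)] at hst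
      obtain rfl := Option.some_inj.mp hst.symm
      have hη : ηproj So (s ++ [Sum.inl (CR δR x0R (ηproj So s))]) = ηproj So s := by
        rw [ηproj_append]; simp [ηproj]
      constructor
      · intro _
        rw [hη]
        exact ⟨witness_UR hR (fun e he => he) (ih _ hrun), fun e he => he⟩
      · intro a ha; exact absurd (show (none : Option S) = some a from ha) (by simp)
  | p2 s q e hs hrun hoe hsome ih =>
      intro st hst
      rw [run_snoc, hrun] at hst
      simp only [Option.bind_some, δAr] at hst
      have IH := ih _ hrun
      cases e with
      | plain a =>
          obtain ⟨ha, hcase⟩ := h2_plain_inv hst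
          have hη : ηproj So (s ++ [Sum.inr (Ev.plain a)]) = ηproj So s ++ [a] := by
            rw [ηproj_append]; simp [ηproj, ha]
          rcases hcase with ⟨hσ, rfl⟩ | ⟨hσ, hg, hγ, z, hz, rfl⟩
          · rw [ConvInv, hη]
            exact IH.2 a hσ
          · obtain ⟨hW, hen⟩ := IH.1 hσ
            rw [ConvInv, hη]
            rintro x' ⟨x, hx, hδ⟩
            obtain ⟨t, r, hrr, hr1, hr2, hr3, hta, htv⟩ := witness_elim hR hW hx
            obtain ⟨y', hy'⟩ := Option.isSome_iff_exists.mp (hr3 ▸ hen a hγ)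
            have hstep : δGRA So Sa δG δR δA r (.plain a) = some (x', y', z) :=
              (δGRA_plain_obs ha r (x', y', z)).mpr ⟨by rw [hr1]; exact hδ, hy', by rw [hr2]; exact hz⟩
            have htot : run (δGRA So Sa δG δR δA) (x0G, x0R, x0A) (t ++ [.plain a]) =
                some (x', y', z) := by rw [run_snoc, hrr]; simpa using hstep
            have hproj : projOe So (t ++ [.plain a]) = projOe So t ++ [.plain a] := by
              rw [projOe_append, projOe_cons_plain_mem ha]; rfl
            obtain ⟨g1, _, _⟩ := GRA_components _ _ _ htot
            refine ⟨t ++ [.plain a], by simp [htot], g1, ?_, ?_⟩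
            · rw [hproj, run_snoc, hta]; simpa using hz
            · rw [hproj, PSproj_append, htv]; simp [PSproj]
      | ins a =>
          obtain ⟨ha, hσ, z, hz, rfl⟩ := h2_ins_inv hst
          have hη : ηproj So (s ++ [Sum.inr (Ev.ins a)]) = ηproj So s := by
            rw [ηproj_append]; simp [ηproj]
          obtain ⟨hW, hen⟩ := IH.1 hσ
          constructor
          · intro hc; simp at hc
          · intro b hb
            obtain rfl : a = b := Option.some_inj.mp hb
            rw [hη]
            rintro x hx
            obtain ⟨t, r, hrr, hr1, hr2, hr3, hta, htv⟩ := witness_elim hR hW hx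
            have hstep : δGRA So Sa δG δR δA r (.ins a) =
                some (r.1, (δR r.2.1 a).getD r.2.1, z) :=
              (δGRA_ins r _).mpr ⟨ha, rfl, rfl, by rw [hr2]; exact hz⟩
            have htot : run (δGRA So Sa δG δR δA) (x0G, x0R, x0A) (t ++ [.ins a]) =
                some (r.1, (δR r.2.1 a).getD r.2.1, z) := by
              rw [run_snoc, hrr]; simpa using hstep
            have hproj : projOe So (t ++ [.ins a]) = projOe So t ++ [.ins a] := by
              rw [projOe_append, projOe_cons_ins]; rfl
            obtain ⟨g1, _, _⟩ := GRA_components _ _ _ htot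
            refine ⟨t ++ [.ins a], by simp [htot], by rw [g1, hr1], ?_, ?_⟩
            · rw [hproj, run_snoc, hta]; simpa using hz
            · rw [hproj, PSproj_append, htv]; simp [PSproj]
      | del a =>
          obtain ⟨ha, hσ, hg, hγ, z, hz, rfl⟩ := h2_del_inv hst
          have hη : ηproj So (s ++ [Sum.inr (Ev.del a)]) = ηproj So s := by
            rw [ηproj_append]; simp [ηproj]
          obtain ⟨hW, hen⟩ := IH.1 hσ
          have hWnx : Witness So Sa δG x0G δR x0R δA x0A (NXr δG a q.1) z (ηproj So s) := by
            rintro x' ⟨x, hx, hδ⟩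
            obtain ⟨t, r, hrr, hr1, hr2, hr3, hta, htv⟩ := witness_elim hR hW hx
            have hstep : δGRA So Sa δG δR δA r (.del a) = some (x', r.2.1, z) :=
              (δGRA_del r _).mpr ⟨ha, by rw [hr1]; exact hδ, hr3 ▸ hen a hγ, rfl,
                by rw [hr2]; exact hz⟩
            have htot : run (δGRA So Sa δG δR δA) (x0G, x0R, x0A) (t ++ [.del a]) =
                some (x', r.2.1, z) := by rw [run_snoc, hrr]; simpa using hstep
            have hproj : projOe So (t ++ [.del a]) = projOe So t ++ [.del a] := by
              rw [projOe_append, projOe_cons_del]; rfl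
            obtain ⟨g1, _, _⟩ := GRA_components _ _ _ htot
            refine ⟨t ++ [.del a], by simp [htot], g1, ?_, ?_⟩
            · rw [hproj, run_snoc, hta]; simpa using hz
            · rw [hproj, PSproj_append, htv]; simp [PSproj]
          constructor
          · intro _
            rw [hη]
            exact ⟨witness_UR hR hen hWnx, hen⟩
          · intro b hb; simp at hb

end Conv
section Fwd
variable {S XG XR XA : Type}
variable {So Suc Sa : Set S} {δG : XG → S → Option XG} {x0G : XG}
  {δR : XR → S → Option XR} {x0R : XR} {δA : XA → Ev S → Option XA} {x0A : XA}

theorem fwd (hSa : Sa ⊆ So) (hR : IsSupRealization So Suc δR) (t : List (Ev S)) :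
    ∀ (r : XG × XR × XA),
      run (δGRA So Sa δG δR δA) (x0G, x0R, x0A) t = some r →
      LRmem So Suc Sa δG x0G δA x0A δR x0R
          (Wword (CR δR x0R []) (projOe So t) (ctrlSeq δR x0R (projOe So t))) ∧
        r.2.1 = ΔRrun δR x0R (PSproj (projOe So t)) ∧
        ηproj So (Wword (CR δR x0R []) (projOe So t) (ctrlSeq δR x0R (projOe So t))) =
          PSproj (projOe So t) ∧
        ∃ S1 : Set XG,
          run (δAr So Suc Sa δG δA) (Sum.inl (arenaInit x0G x0A))
              (Wword (CR δR x0R []) (projOe So t) (ctrlSeq δR x0R (projOe So t))) =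
            some (Sum.inr (S1, r.2.2, CR δR x0R (PSproj (projOe So t)), none)) ∧
          r.1 ∈ S1 ∧ URch So δG (CR δR x0R (PSproj (projOe So t))) S1 ⊆ S1 := by
  induction t using List.reverseRecOn with
  | nil =>
      intro r hr
      simp only [run, Option.some_inj] at hr
      subst hr
      have hpo : projOe So ([] : List (Ev S)) = [] := by simp [projOe]
      have hcs : ctrlSeq δR x0R ([] : List (Ev S)) = [] := by simp [ctrlSeq]
      have hW : Wword (CR δR x0R []) (projOe So ([] : List (Ev S)))
          (ctrlSeq δR x0R (projOe So ([] : List (Ev S)))) = [Sum.inl (CR δR x0R [])] := by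
        rw [hpo]; simp [Wword, ctrlSeq]
      have hps : PSproj (projOe So ([] : List (Ev S))) = [] := by simp [hpo, PSproj]
      rw [hW, hps]
      refine ⟨?_, by simp [ΔRrun], by simp [ηproj], ?_⟩
      · have := LRmem.p1R (So := So) (Suc := Suc) (Sa := Sa) (δG := δG) (x0G := x0G)
          (δA := δA) (x0A := x0A) (δR := δR) (x0R := x0R) [] (arenaInit x0G x0A)
          LRmem.nil (by simp [run])
        simpa [ηproj] using this
      · refine ⟨URch So δG (CR δR x0R []) {x0G}, ?_, ?_, URch_trans⟩
        · simp only [run, δAr_inl_inl (Suc_sub_CR hR [])]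
          simp [run, h1, arenaInit]
        · exact mem_URch_self rfl
  | append_singleton t e ih =>
      intro r hrr
      rw [run_snoc] at hrr
      obtain ⟨r0, hr0, hstep⟩ := Option.bind_eq_some_iff.mp hrr
      obtain ⟨hL, hy, hη, S1, hA, hx, hcl⟩ := ih r0 hr0
      cases e with
      | plain a =>
          by_cases ha : a ∈ So
          · -- observable plant event
            obtain ⟨hg, hr2, hz⟩ := (δGRA_plain_obs ha r0 r).mp hstep
            have hpo : projOe So (t ++ [Ev.plain a]) = projOe So t ++ [Ev.plain a] := by
              rw [projOe_append, projOe_cons_plain_mem ha]; rfl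
            have hps : PSproj (projOe So (t ++ [Ev.plain a])) =
                PSproj (projOe So t) ++ [a] := by
              rw [hpo, PSproj_append]; simp [PSproj]
            have haγ : a ∈ CR δR x0R (PSproj (projOe So t)) := by
              show (δR (ΔRrun δR x0R (PSproj (projOe So t))) a).isSome
              rw [← hy, hr2]; rfl
            have hW' : Wword (CR δR x0R []) (projOe So (t ++ [Ev.plain a]))
                (ctrlSeq δR x0R (projOe So (t ++ [Ev.plain a]))) =
                Wword (CR δR x0R []) (projOe So t) (ctrlSeq δR x0R (projOe So t)) ++
                  [Sum.inr (Ev.plain a),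
                   Sum.inl (CR δR x0R (PSproj (projOe So (t ++ [Ev.plain a]))))] := by
              rw [hpo, ctrlSeq_snoc, Wword_snoc _ _ _ _ (ctrlSeq_length δR x0R _).symm, ← hpo]
            have hΔ : r.2.1 = ΔRrun δR x0R (PSproj (projOe So (t ++ [Ev.plain a]))) := by
              rw [hps, ΔRrun_append, ← hy]
              simp [ΔRrun, hr2]
            have hstep1 : h2 So Sa δG δA (S1, r0.2.2, CR δR x0R (PSproj (projOe So t)), none)
                (.plain a) = some (Sum.inl (NXr δG a S1, r.2.2)) :=
              h2_plain_new ha rfl ⟨r0.1, hx, by simp [hg]⟩ haγ hz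
            have hrun1 : run (δAr So Suc Sa δG δA) (Sum.inl (arenaInit x0G x0A))
                (Wword (CR δR x0R []) (projOe So t) (ctrlSeq δR x0R (projOe So t)) ++
                  [Sum.inr (Ev.plain a)]) = some (Sum.inl (NXr δG a S1, r.2.2)) := by
              rw [run_snoc, hA]
              simpa [δAr] using hstep1
            have hrun2 : run (δAr So Suc Sa δG δA) (Sum.inl (arenaInit x0G x0A))
                (Wword (CR δR x0R []) (projOe So (t ++ [Ev.plain a]))
                  (ctrlSeq δR x0R (projOe So (t ++ [Ev.plain a])))) =
                some (Sum.inr (URch So δG (CR δR x0R (PSproj (projOe So (t ++ [Ev.plain a]))))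
                  (NXr δG a S1), r.2.2,
                  CR δR x0R (PSproj (projOe So (t ++ [Ev.plain a]))), none)) := by
              rw [hW', show (Wword (CR δR x0R []) (projOe So t) (ctrlSeq δR x0R (projOe So t)) ++
                  [Sum.inr (Ev.plain a),
                   Sum.inl (CR δR x0R (PSproj (projOe So (t ++ [Ev.plain a]))))]) =
                  ((Wword (CR δR x0R []) (projOe So t) (ctrlSeq δR x0R (projOe So t)) ++
                  [Sum.inr (Ev.plain a)]) ++
                  [Sum.inl (CR δR x0R (PSproj (projOe So (t ++ [Ev.plain a]))))]) by
                  simp]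
              rw [run_snoc, hrun1]
              simp only [Option.bind_some, δAr_inl_inl (Suc_sub_CR hR _)]
              simp [h1]
            have hη' : ηproj So (Wword (CR δR x0R []) (projOe So (t ++ [Ev.plain a]))
                (ctrlSeq δR x0R (projOe So (t ++ [Ev.plain a])))) =
                PSproj (projOe So (t ++ [Ev.plain a])) := by
              rw [hW', ηproj_append, hη, hps]
              simp [ηproj, ha]
            refine ⟨?_, hΔ, hη', ?_⟩
            · rw [hW']
              have hm1 : LRmem So Suc Sa δG x0G δA x0A δR x0R
                  (Wword (CR δR x0R []) (projOe So t) (ctrlSeq δR x0R (projOe So t)) ++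
                    [Sum.inr (Ev.plain a)]) :=
                LRmem.p2 _ _ _ hL hA ha (by simp [hrun1])
              have hm2 := LRmem.p1R _ _ hm1 hrun1
              have : CR δR x0R (ηproj So
                  (Wword (CR δR x0R []) (projOe So t) (ctrlSeq δR x0R (projOe So t)) ++
                    [Sum.inr (Ev.plain a)])) =
                  CR δR x0R (PSproj (projOe So (t ++ [Ev.plain a]))) := by
                rw [ηproj_append, hη, hps]; simp [ηproj, ha]
              rw [this] at hm2
              simpa using hm2
            · exact ⟨_, hrun2, mem_URch_self ⟨r0.1, hx, hg⟩, URch_trans⟩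
          · -- unobservable plant event
            obtain ⟨hg, hr2, hz⟩ := (δGRA_plain_unobs ha r0 r).mp hstep
            have hpo : projOe So (t ++ [Ev.plain a]) = projOe So t := by
              rw [projOe_append, projOe_cons_plain_not ha]; simp [projOe]
            have hr2' : δR r0.2.1 a = some r0.2.1 := hR.2 _ a ha (by simp [hr2])
            have hyy : r.2.1 = r0.2.1 := by
              rw [hr2'] at hr2; exact (Option.some_inj.mp hr2).symm
            have haγ : a ∈ CR δR x0R (PSproj (projOe So t)) := by
              show (δR (ΔRrun δR x0R (PSproj (projOe So t))) a).isSome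
              rw [← hy, hr2']; rfl
            rw [hpo]
            refine ⟨hL, by rw [hyy, hy], hη, S1, ?_, ?_, hcl⟩
            · rw [hz]; exact hA
            · exact hcl (URch_step (mem_URch_self hx) ha haγ hg)
      | ins a =>
          obtain ⟨ha, hg, hr2, hz⟩ := (δGRA_ins r0 r).mp hstep
          have haSo : a ∈ So := hSa ha
          have hpo : projOe So (t ++ [Ev.ins a]) = projOe So t ++ [Ev.ins a] := by
            rw [projOe_append, projOe_cons_ins]; rfl
          have hps : PSproj (projOe So (t ++ [Ev.ins a])) =
              PSproj (projOe So t) ++ [a] := by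
            rw [hpo, PSproj_append]; simp [PSproj]
          have hW' : Wword (CR δR x0R []) (projOe So (t ++ [Ev.ins a]))
              (ctrlSeq δR x0R (projOe So (t ++ [Ev.ins a]))) =
              Wword (CR δR x0R []) (projOe So t) (ctrlSeq δR x0R (projOe So t)) ++
                [Sum.inr (Ev.ins a), Sum.inr (Ev.plain a),
                 Sum.inl (CR δR x0R (PSproj (projOe So (t ++ [Ev.ins a]))))] := by
            rw [hpo, ctrlSeq_snoc, Wword_snoc _ _ _ _ (ctrlSeq_length δR x0R _).symm, ← hpo]
          have hΔ : r.2.1 = ΔRrun δR x0R (PSproj (projOe So (t ++ [Ev.ins a]))) := by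
            rw [hps, ΔRrun_append, ← hy, hr2]
            simp [ΔRrun]
          have hstep1 : h2 So Sa δG δA (S1, r0.2.2, CR δR x0R (PSproj (projOe So t)), none)
              (.ins a) = some (Sum.inr (S1, r.2.2, CR δR x0R (PSproj (projOe So t)), some a)) :=
            h2_ins_eq ha rfl hz
          have hstep2 : h2 So Sa δG δA (S1, r.2.2, CR δR x0R (PSproj (projOe So t)), some a)
              (.plain a) = some (Sum.inl (S1, r.2.2)) :=
            h2_plain_match haSo rfl
          have hrun1 : run (δAr So Suc Sa δG δA) (Sum.inl (arenaInit x0G x0A))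
              (Wword (CR δR x0R []) (projOe So t) (ctrlSeq δR x0R (projOe So t)) ++
                [Sum.inr (Ev.ins a)]) =
              some (Sum.inr (S1, r.2.2, CR δR x0R (PSproj (projOe So t)), some a)) := by
            rw [run_snoc, hA]
            simpa [δAr] using hstep1
          have hrun2 : run (δAr So Suc Sa δG δA) (Sum.inl (arenaInit x0G x0A))
              ((Wword (CR δR x0R []) (projOe So t) (ctrlSeq δR x0R (projOe So t)) ++
                [Sum.inr (Ev.ins a)]) ++ [Sum.inr (Ev.plain a)]) =
              some (Sum.inl (S1, r.2.2)) := by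
            rw [run_snoc, hrun1]
            simpa [δAr] using hstep2
          have hrun2' : run (δAr So Suc Sa δG δA) (Sum.inl (arenaInit x0G x0A))
              (Wword (CR δR x0R []) (projOe So t) (ctrlSeq δR x0R (projOe So t)) ++
                [Sum.inr (Ev.ins a), Sum.inr (Ev.plain a)]) =
              some (Sum.inl (S1, r.2.2)) := by
            rw [show (Wword (CR δR x0R []) (projOe So t) (ctrlSeq δR x0R (projOe So t)) ++
                [Sum.inr (Ev.ins a), Sum.inr (Ev.plain a)]) =
                ((Wword (CR δR x0R []) (projOe So t) (ctrlSeq δR x0R (projOe So t)) ++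
                [Sum.inr (Ev.ins a)]) ++ [Sum.inr (Ev.plain a)]) by simp]
            exact hrun2
          have hrun3 : run (δAr So Suc Sa δG δA) (Sum.inl (arenaInit x0G x0A))
              (Wword (CR δR x0R []) (projOe So (t ++ [Ev.ins a]))
                (ctrlSeq δR x0R (projOe So (t ++ [Ev.ins a])))) =
              some (Sum.inr (URch So δG (CR δR x0R (PSproj (projOe So (t ++ [Ev.ins a])))) S1,
                r.2.2, CR δR x0R (PSproj (projOe So (t ++ [Ev.ins a]))), none)) := by
            rw [hW', show (Wword (CR δR x0R []) (projOe So t) (ctrlSeq δR x0R (projOe So t)) ++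
                [Sum.inr (Ev.ins a), Sum.inr (Ev.plain a),
                 Sum.inl (CR δR x0R (PSproj (projOe So (t ++ [Ev.ins a]))))]) =
                (((Wword (CR δR x0R []) (projOe So t) (ctrlSeq δR x0R (projOe So t)) ++
                [Sum.inr (Ev.ins a)]) ++ [Sum.inr (Ev.plain a)]) ++
                [Sum.inl (CR δR x0R (PSproj (projOe So (t ++ [Ev.ins a]))))]) by simp]
            rw [run_snoc, hrun2]
            simp only [Option.bind_some, δAr_inl_inl (Suc_sub_CR hR _)]
            simp [h1]
          have hη' : ηproj So (Wword (CR δR x0R []) (projOe So (t ++ [Ev.ins a]))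
              (ctrlSeq δR x0R (projOe So (t ++ [Ev.ins a])))) =
              PSproj (projOe So (t ++ [Ev.ins a])) := by
            rw [hW', ηproj_append, hη, hps]
            simp [ηproj, haSo]
          refine ⟨?_, hΔ, hη', ?_⟩
          · rw [hW']
            have hm1 : LRmem So Suc Sa δG x0G δA x0A δR x0R
                (Wword (CR δR x0R []) (projOe So t) (ctrlSeq δR x0R (projOe So t)) ++
                  [Sum.inr (Ev.ins a)]) :=
              LRmem.p2 _ _ _ hL hA ha (by simp [hrun1])
            have hm2 : LRmem So Suc Sa δG x0G δA x0A δR x0R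
                ((Wword (CR δR x0R []) (projOe So t) (ctrlSeq δR x0R (projOe So t)) ++
                  [Sum.inr (Ev.ins a)]) ++ [Sum.inr (Ev.plain a)]) :=
              LRmem.p2 _ _ _ hm1 hrun1 haSo (by simp [hrun2'])
            have hm3 := LRmem.p1R _ _ hm2 hrun2
            have : CR δR x0R (ηproj So
                ((Wword (CR δR x0R []) (projOe So t) (ctrlSeq δR x0R (projOe So t)) ++
                  [Sum.inr (Ev.ins a)]) ++ [Sum.inr (Ev.plain a)])) =
                CR δR x0R (PSproj (projOe So (t ++ [Ev.ins a]))) := by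
              rw [ηproj_append, ηproj_append, hη, hps]; simp [ηproj, haSo]
            rw [this] at hm3
            simpa using hm3
          · exact ⟨_, hrun3, mem_URch_self (hg ▸ hx), URch_trans⟩
      | del a =>
          obtain ⟨ha, hg, hsm, hr2, hz⟩ := (δGRA_del r0 r).mp hstep
          have hpo : projOe So (t ++ [Ev.del a]) = projOe So t ++ [Ev.del a] := by
            rw [projOe_append, projOe_cons_del]; rfl
          have hps : PSproj (projOe So (t ++ [Ev.del a])) = PSproj (projOe So t) := by
            rw [hpo, PSproj_append]; simp [PSproj]
          have haγ : a ∈ CR δR x0R (PSproj (projOe So t)) := by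
            show (δR (ΔRrun δR x0R (PSproj (projOe So t))) a).isSome
            rw [← hy]; exact hsm
          have hW' : Wword (CR δR x0R []) (projOe So (t ++ [Ev.del a]))
              (ctrlSeq δR x0R (projOe So (t ++ [Ev.del a]))) =
              Wword (CR δR x0R []) (projOe So t) (ctrlSeq δR x0R (projOe So t)) ++
                [Sum.inr (Ev.del a)] := by
            rw [hpo, ctrlSeq_snoc, Wword_snoc _ _ _ _ (ctrlSeq_length δR x0R _).symm]
          have hstep1 : h2 So Sa δG δA (S1, r0.2.2, CR δR x0R (PSproj (projOe So t)), none)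
              (.del a) = some (Sum.inr (URch So δG (CR δR x0R (PSproj (projOe So t)))
                (NXr δG a S1), r.2.2, CR δR x0R (PSproj (projOe So t)), none)) :=
            h2_del_eq ha rfl ⟨r0.1, hx, by simp [hg]⟩ haγ hz
          have hrun1 : run (δAr So Suc Sa δG δA) (Sum.inl (arenaInit x0G x0A))
              (Wword (CR δR x0R []) (projOe So t) (ctrlSeq δR x0R (projOe So t)) ++
                [Sum.inr (Ev.del a)]) =
              some (Sum.inr (URch So δG (CR δR x0R (PSproj (projOe So t))) (NXr δG a S1),
                r.2.2, CR δR x0R (PSproj (projOe So t)), none)) := by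
            rw [run_snoc, hA]
            simpa [δAr] using hstep1
          have hη' : ηproj So (Wword (CR δR x0R []) (projOe So (t ++ [Ev.del a]))
              (ctrlSeq δR x0R (projOe So (t ++ [Ev.del a])))) =
              PSproj (projOe So (t ++ [Ev.del a])) := by
            rw [hW', ηproj_append, hη, hps]; simp [ηproj]
          refine ⟨?_, by rw [hps, hr2, hy], hη', ?_⟩
          · rw [hW']
            exact LRmem.p2 _ _ _ hL hA ha (by simp [hrun1])
          · rw [hps, hW']
            exact ⟨_, hrun1, mem_URch_self ⟨r0.1, hx, hg⟩, URch_trans⟩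

end Fwd
section Norm
variable {S XG XR XA : Type}
variable {So Suc Sa : Set S} {δG : XG → S → Option XG} {x0G : XG}
  {δR : XR → S → Option XR} {x0R : XR} {δA : XA → Ev S → Option XA} {x0A : XA}

theorem ηproj_projEo (So : Set S) :
    ∀ (u : List (Set S ⊕ Ev S)), ηproj So (projEo u) = ηproj So u := by
  intro u
  induction u with
  | nil => simp [ηproj, projEo]
  | cons c u ih =>
      rcases c with γ | e
      · show ηproj So (Sum.inl γ :: projEo u) = _
        simp only [ηproj, List.flatMap_cons] at ih ⊢
        rw [ih]
      · cases e with
        | plain a =>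
            show ηproj So (Sum.inr (Ev.plain a) :: projEo u) = _
            simp only [ηproj, List.flatMap_cons] at ih ⊢
            rw [ih]
        | ins a =>
            show ηproj So (projEo u) = _
            simp only [ηproj, List.flatMap_cons] at ih ⊢
            rw [ih]; simp
        | del a =>
            show ηproj So (projEo u) = _
            simp only [ηproj, List.flatMap_cons] at ih ⊢
            rw [ih]; simp

theorem projEo_snoc_inv :
    ∀ (u v : List (Set S ⊕ Ev S)) (w : Set S ⊕ Ev S),
      projEo u = v ++ [w] → ∃ u1, u1 ++ [w] <+: u ∧ projEo u1 = v := by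
  intro u
  induction u using List.reverseRecOn with
  | nil => intro v w h; simp [projEo] at h
  | append_singleton u c ih =>
      intro v w h
      rw [projEo_append] at h
      rcases c with γ | e
      · have hc : projEo [(Sum.inl γ : Set S ⊕ Ev S)] = [Sum.inl γ] := by simp [projEo]
        rw [hc] at h
        obtain ⟨h1, h2⟩ := List.append_inj' h rfl
        obtain rfl : w = Sum.inl γ := by simpa using h2.symm
        exact ⟨u, List.prefix_refl _, h1⟩
      · cases e with
        | plain a =>
            have hc : projEo [(Sum.inr (Ev.plain a) : Set S ⊕ Ev S)] =
                [Sum.inr (Ev.plain a)] := by simp [projEo]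
            rw [hc] at h
            obtain ⟨h1, h2⟩ := List.append_inj' h rfl
            obtain rfl : w = Sum.inr (Ev.plain a) := by simpa using h2.symm
            exact ⟨u, List.prefix_refl _, h1⟩
        | ins a =>
            have hc : projEo [(Sum.inr (Ev.ins a) : Set S ⊕ Ev S)] = [] := by simp [projEo]
            rw [hc, List.append_nil] at h
            obtain ⟨u1, hpre, hp⟩ := ih v w h
            exact ⟨u1, hpre.trans (List.prefix_append _ _), hp⟩
        | del a =>
            have hc : projEo [(Sum.inr (Ev.del a) : Set S ⊕ Ev S)] = [] := by simp [projEo]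
            rw [hc, List.append_nil] at h
            obtain ⟨u1, hpre, hp⟩ := ih v w h
            exact ⟨u1, hpre.trans (List.prefix_append _ _), hp⟩

theorem LRmem_snoc_inl {s : List (Set S ⊕ Ev S)} {γ : Set S}
    (h : LRmem So Suc Sa δG x0G δA x0A δR x0R (s ++ [Sum.inl γ])) :
    γ = Suc ∨ γ = CR δR x0R (ηproj So s) := by
  generalize hq : s ++ [Sum.inl γ] = w at h
  cases h with
  | nil => exact absurd hq (by simp)
  | p2 s₀ q e _ _ _ _ =>
      obtain ⟨_, h2⟩ := List.append_inj' hq rfl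
      simp at h2
  | p1uc s₀ p _ _ =>
      obtain ⟨_, h2⟩ := List.append_inj' hq rfl
      left; simpa using h2
  | p1R s₀ p _ _ =>
      obtain ⟨h1, h2⟩ := List.append_inj' hq rfl
      right
      have : γ = CR δR x0R (ηproj So s₀) := by simpa using h2
      rw [this, h1]

theorem K_controllable (hR : IsSupRealization So Suc δR) :
    ControllableLang (LA So Suc Sa δG δA x0G x0A) (Ec Suc)ᶜ
      {u | LRmem So Suc Sa δG x0G δA x0A δR x0R u} := by
  intro s hs a ha hsa
  have hsa' : (run (δAr So Suc Sa δG δA) (Sum.inl (arenaInit x0G x0A))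
      (s ++ [a])).isSome := hsa
  obtain ⟨st', hst'⟩ := Option.isSome_iff_exists.mp hsa'
  rw [run_snoc] at hst'
  obtain ⟨st, hst, hstep⟩ := Option.bind_eq_some_iff.mp hst'
  cases st with
  | inl p =>
      obtain ⟨γ, rfl, hγ, _⟩ := δAr_inl_inv hstep
      have hγe : γ = Suc := by
        by_contra hne
        exact ha ⟨γ, rfl, hγ, hne⟩
      subst hγe
      exact LRmem.p1uc s p hs hst
  | inr q =>
      obtain ⟨e, rfl, h2eq⟩ := δAr_inr_inv hstep
      exact LRmem.p2 s q e hs hst (h2_inOe h2eq) hsa'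

theorem K_normal_aux (hR : IsSupRealization So Suc δR) :
    ∀ (s : List (Set S ⊕ Ev S)), s ∈ LA So Suc Sa δG δA x0G x0A →
      ∀ t, LRmem So Suc Sa δG x0G δA x0A δR x0R t → projEo t = projEo s →
        LRmem So Suc Sa δG x0G δA x0A δR x0R s := by
  intro s
  induction s using List.reverseRecOn with
  | nil => intro _ _ _ _; exact LRmem.nil
  | append_singleton s c ih =>
      intro hsL t ht hpt
      have hsL' : s ∈ LA So Suc Sa δG δA x0G x0A :=
        lang_prefix hsL (List.prefix_append _ _)
      have hsa' : (run (δAr So Suc Sa δG δA) (Sum.inl (arenaInit x0G x0A))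
          (s ++ [c])).isSome := hsL
      obtain ⟨st', hst'⟩ := Option.isSome_iff_exists.mp hsa'
      rw [run_snoc] at hst'
      obtain ⟨st, hst, hstep⟩ := Option.bind_eq_some_iff.mp hst'
      rcases c with γ | e
      · -- control decision
        cases st with
        | inr q =>
            obtain ⟨e, he, _⟩ := δAr_inr_inv hstep
            exact absurd he (by simp)
        | inl p =>
            have hpe : projEo (s ++ [(Sum.inl γ : Set S ⊕ Ev S)]) =
                projEo s ++ [Sum.inl γ] := by
              rw [projEo_append]; simp [projEo]
            rw [hpe] at hpt
            obtain ⟨t1, hpre1, hpv⟩ := projEo_snoc_inv t (projEo s) (Sum.inl γ) hpt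
            have ht1γ : LRmem So Suc Sa δG x0G δA x0A δR x0R (t1 ++ [Sum.inl γ]) :=
              LRmem_prefix ht hpre1
            have hsK : LRmem So Suc Sa δG x0G δA x0A δR x0R s :=
              ih hsL' t1 (LRmem_prefix ht ((List.prefix_append _ _).trans hpre1)) hpv
            rcases LRmem_snoc_inl ht1γ with rfl | hc
            · exact LRmem.p1uc s p hsK hst
            · have : γ = CR δR x0R (ηproj So s) := by
                rw [hc, ← ηproj_projEo So t1, hpv, ηproj_projEo]
              rw [this]
              exact LRmem.p1R s p hsK hst
      · -- event
        cases st with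
        | inl p =>
            obtain ⟨γ, he, _⟩ := δAr_inl_inv hstep
            exact absurd he (by simp)
        | inr q =>
            have hioe : inOe So Sa e := h2_inOe hstep
            have hsK : LRmem So Suc Sa δG x0G δA x0A δR x0R s := by
              cases e with
              | plain a =>
                  have hpe : projEo (s ++ [(Sum.inr (Ev.plain a) : Set S ⊕ Ev S)]) =
                      projEo s ++ [Sum.inr (Ev.plain a)] := by
                    rw [projEo_append]; simp [projEo]
                  rw [hpe] at hpt
                  obtain ⟨t1, hpre1, hpv⟩ := projEo_snoc_inv t _ _ hpt
                  exact ih hsL' t1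
                    (LRmem_prefix ht ((List.prefix_append _ _).trans hpre1)) hpv
              | ins a =>
                  have hpe : projEo (s ++ [(Sum.inr (Ev.ins a) : Set S ⊕ Ev S)]) =
                      projEo s := by
                    rw [projEo_append]; simp [projEo]
                  rw [hpe] at hpt
                  exact ih hsL' t ht hpt
              | del a =>
                  have hpe : projEo (s ++ [(Sum.inr (Ev.del a) : Set S ⊕ Ev S)]) =
                      projEo s := by
                    rw [projEo_append]; simp [projEo]
                  rw [hpe] at hpt
                  exact ih hsL' t ht hpt
            exact LRmem.p2 s q e hsK hst hioe hsa'

theorem K_normal (hR : IsSupRealization So Suc δR) :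
    NormalLang projEo (LA So Suc Sa δG δA x0G x0A)
      {u | LRmem So Suc Sa δG x0G δA x0A δR x0R u} := by
  ext s
  constructor
  · intro hs
    exact ⟨LRmem_lang hR hs, s, hs, rfl⟩
  · rintro ⟨hsL, t, ht, hpt⟩
    exact K_normal_aux hR s hsL t ht hpt

theorem K_trim {Xcrit : Set XG} (hSa : Sa ⊆ So) (hR : IsSupRealization So Suc δR)
    (hrob : Robust So Sa Xcrit δG x0G δR x0R δA x0A) :
    {u | LRmem So Suc Sa δG x0G δA x0A δR x0R u} ⊆
      LAtrim So Suc Sa δG δA x0G x0A Xcrit := by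
  intro u hu
  refine ⟨LRmem_lang hR hu, ?_⟩
  intro u' hpre st hst
  have hu' := LRmem_prefix hu hpre
  have hinv := conv hSa hR hu' st hst
  rw [Set.eq_empty_iff_forall_notMem]
  rintro x ⟨hx1, hx2⟩
  have hW : ∃ v, Witness So Sa δG x0G δR x0R δA x0A (I1 st) (I2 st) v := by
    cases st with
    | inl p => exact ⟨_, hinv⟩
    | inr q =>
        rcases hσ : q.2.2.2 with _ | a
        · exact ⟨_, (hinv.1 hσ).1⟩
        · exact ⟨_, hinv.2 a hσ⟩
  obtain ⟨v, hWv⟩ := hW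
  obtain ⟨t, htS, htg, _, _⟩ := hWv x hx1
  exact hrob t htS x (Ga_run_PG t _ _ htg) hx2

end Norm
/-- Theorem 1: a supervisor `R` is robust w.r.t. `G`, `X_crit`
and `A` if and only if for every `s ∈ P_{Σ_mΣ_{o,e}}(L(G_a||R_a||A))`, the run
word `W(s; γ₀, γ₁, …, γ_{|s|})` belongs to `L(𝒜^{sup})`, where `γ₀ = C_R(ε)`
and `γ_i = C_R(P^S(s^i))`. -/

theorem robust_iff_run_in_Lsup
    [Finite S] [Finite XG] [Finite XR] [Finite XA]
    (So Suc Sa : Set S) (hSa : Sa ⊆ So) (Xcrit : Set XG)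
    (δG : XG → S → Option XG) (x0G : XG)
    (δR : XR → S → Option XR) (x0R : XR) (hR : IsSupRealization So Suc δR)
    (δA : XA → Ev S → Option XA) (x0A : XA) (hA : IsAttack So Sa δA) :
    Robust So Sa Xcrit δG x0G δR x0R δA x0A ↔
      ∀ s ∈ projOe So '' Lang (δGRA So Sa δG δR δA) (x0G, x0R, x0A),
        Wword (CR δR x0R []) s (ctrlSeq δR x0R s) ∈
          Lsup So Suc Sa δG δA x0G x0A Xcrit := by
  constructor
  · intro hrob s hs
    obtain ⟨t, ht, rfl⟩ := hs
    obtain ⟨r, hr⟩ := Option.isSome_iff_exists.mp ht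
    exact ⟨{u | LRmem So Suc Sa δG x0G δA x0A δR x0R u},
      ⟨K_trim hSa hR hrob, K_controllable hR, K_normal hR⟩,
      (fwd (x0A := x0A) hSa hR t r hr).1⟩
  · intro h t htL x hx
    have hW := h (projOe So t) ⟨t, htL, rfl⟩
    obtain ⟨K, ⟨hKtrim, _, _⟩, hWK⟩ := hW
    obtain ⟨hWLA, hcrit⟩ := hKtrim hWK
    obtain ⟨r, hr⟩ := Option.isSome_iff_exists.mp htL
    obtain ⟨_, _, _, S1, hArun, hxS, _⟩ := fwd (x0A := x0A) hSa hR t r hr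
    have hxr : x = r.1 := by
      have h1 := Ga_run_PG t x0G r.1 (GRA_components t _ r hr).1
      rw [hx] at h1
      exact Option.some_inj.mp h1
    have hempty := hcrit _ (List.prefix_refl _) _ hArun
    intro hxc
    have : x ∈ I1 (Sum.inr (S1, r.2.2, CR δR x0R (PSproj (projOe So t)), none) :
        AQ1 XG XA ⊕ AQ2 S XG XA) ∩ Xcrit := ⟨by simp [I1, hxr, hxS], hxc⟩
    rw [hempty] at this
    exact this
end RobustDES
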